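/- (Iteration bound for Stochastic Sinkhorn.) Let n ≥ 1 be an integer and R > 0, ε > 0. Let (δ_k)_{k≥1} and (E_k)_{k≥1} be sequences of nonnegative reals such that for every k ≥ 1: δ_k − δ_{k+1} ≥ E_k²/(28 n) and δ_k ≤ 4 R E_k. If K ≥ 1 is such that E_k > ε for every 1 ≤ k ≤ K, then K ≤ 2 + 224 n R/ε. (Consequently, some iterate k ≤ 2 + 224 n R/ε satisfies E_k ≤ ε.) -/

import Mathlib

set_option maxHeartbeats 1000000


/-- Iteration bound for Stochastic Sinkhorn.  If the nonnegative sequences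
`δ_k` (expected dual gap) and `E_k` (expected marginal violation) satisfy the per-iteration
progress bound `δ_k − δ_{k+1} ≥ E_k²/(28 n)` and the dual-gap bound `δ_k ≤ 4 R E_k` for all
`k ≥ 1`, and `E_k > ε` for all `1 ≤ k ≤ K`, then `K ≤ 2 + 224 n R / ε`. -/
theorem stochastic_sinkhorn_iteration_bound (n : ℕ) (hn : 1 ≤ n) (R ε : ℝ)
    (hR : 0 < R) (hε : 0 < ε) (δ E : ℕ → ℝ)
    (hδ : ∀ k, 1 ≤ k → 0 ≤ δ k) (hE : ∀ k, 1 ≤ k → 0 ≤ E k)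
    (hprog : ∀ k, 1 ≤ k → E k ^ 2 / (28 * n) ≤ δ k - δ (k + 1))
    (hgap : ∀ k, 1 ≤ k → δ k ≤ 4 * R * E k)
    (K : ℕ) (hK : 1 ≤ K) (hEK : ∀ k, 1 ≤ k → k ≤ K → ε < E k) :
    (K : ℝ) ≤ 2 + 224 * n * R / ε := by
  classical
  have hn1 : (1:ℝ) ≤ n := by exact_mod_cast hn
  have hn0 : (0:ℝ) < n := by linarith
  have h28 : (0:ℝ) < 28 * n := by positivity
  set C : ℝ := 448 * n * R ^ 2 with hC
  have hCpos : 0 < C := by positivity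
  -- monotonicity of δ
  have hmono : ∀ k, 1 ≤ k → δ (k + 1) ≤ δ k := by
    intro k hk
    have h := hprog k hk
    have h2 : 0 ≤ E k ^ 2 / (28 * n) := by positivity
    linarith
  have hmono' : ∀ a b, 1 ≤ a → a ≤ b → δ b ≤ δ a := by
    intro a b ha hab
    induction b, hab using Nat.le_induction with
    | base => exact le_rfl
    | succ m hm ih => exact le_trans (hmono m (le_trans ha hm)) ih
  have hδK : ε ^ 2 / (28 * n) ≤ δ K := by
    have h1 := hprog K hK
    have h2 := hδ (K + 1) (by omega)
    have h3 : ε ^ 2 ≤ E K ^ 2 := by nlinarith [hEK K hK le_rfl, hε]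
    have h4 : ε ^ 2 / (28 * n) ≤ E K ^ 2 / (28 * n) := by gcongr
    linarith
  have hεKpos : 0 < ε ^ 2 / (28 * n) := by positivity
  have hδpos : ∀ k, 1 ≤ k → k ≤ K → 0 < δ k := fun k h1 h2 =>
    lt_of_lt_of_le (lt_of_lt_of_le hεKpos hδK) (hmono' k K h1 h2)
  -- linear decrease lemma
  have hlin : ∀ d m, 1 ≤ m → m + d = K → ((d : ℝ) + 1) * (ε ^ 2 / (28 * n)) ≤ δ m := by
    intro d
    induction d with
    | zero =>
      intro m hm hmK
      have : m = K := by omega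
      subst this
      simpa using hδK
    | succ d ih =>
      intro m hm hmK
      have hih := ih (m + 1) (by omega) (by omega)
      have h1 := hprog m hm
      have h3 : ε ^ 2 ≤ E m ^ 2 := by nlinarith [hEK m hm (by omega), hε]
      have h4 : ε ^ 2 / (28 * n) ≤ E m ^ 2 / (28 * n) := by gcongr
      push_cast
      linarith
  -- inverse step lemma
  have hinvstep : ∀ k, 1 ≤ k → k + 1 ≤ K → 1 / δ k + 1 / C ≤ 1 / δ (k + 1) := by
    intro k h1 h2
    have pk := hδpos k h1 (by omega)
    have pk1 := hδpos (k + 1) (by omega) h2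
    have hm := hmono k h1
    have hg := hgap k h1
    have hEk := hE k h1
    have hsq : δ k ^ 2 ≤ 16 * R ^ 2 * E k ^ 2 := by nlinarith [pk.le]
    have hp := hprog k h1
    have hkey : δ k ^ 2 ≤ C * (δ k - δ (k + 1)) := by
      have hq : δ k ^ 2 / C ≤ E k ^ 2 / (28 * n) := by
        rw [div_le_div_iff₀ hCpos h28]
        nlinarith [sq_nonneg (E k), hR.le]
      have hq2 := hq.trans hp
      rw [div_le_iff₀ hCpos] at hq2
      nlinarith
    rw [div_add_div _ _ (ne_of_gt pk) (ne_of_gt hCpos),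
      div_le_div_iff₀ (by positivity) pk1]
    nlinarith [hkey, mul_le_mul_of_nonneg_left hm pk.le]
  -- inverse telescoping
  have hinv : ∀ m, 1 ≤ m → m ≤ K → ((m : ℝ) - 1) / C ≤ 1 / δ m := by
    intro m hm
    induction m, hm using Nat.le_induction with
    | base =>
      intro _
      simp only [Nat.cast_one, sub_self, zero_div]
      have := hδpos 1 le_rfl hK
      positivity
    | succ m hm ih =>
      intro hmK
      have h1 := ih (by omega)
      have h2 := hinvstep m hm hmK
      have heq : ((m : ℝ) - 1) / C + 1 / C = ((m : ℝ) + 1 - 1) / C := by ring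
      push_cast
      linarith
  -- final conclusion helper
  have hfin : ((K : ℝ) - 2) * ε ≤ 224 * n * R → (K : ℝ) ≤ 2 + 224 * n * R / ε := by
    intro h
    have : (K : ℝ) - 2 ≤ 224 * n * R / ε := by
      rw [le_div_iff₀ hε]; exact h
    linarith
  by_cases hA : ∀ k, 1 ≤ k → k ≤ K → 4 * R * ε ≤ δ k
  · -- δ never drops below 4Rε
    have h1 := hinv K hK le_rfl
    have h2 : 1 / δ K ≤ 1 / (4 * R * ε) :=
      one_div_le_one_div_of_le (by positivity) (hA K hK le_rfl)
    have h3 : ((K : ℝ) - 1) / C ≤ 1 / (4 * R * ε) := h1.trans h2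
    rw [div_le_div_iff₀ hCpos (by positivity)] at h3
    apply hfin
    nlinarith [hR, hε, mul_pos hR hε, Nat.cast_nonneg (α := ℝ) K, mul_pos hn0 hR]
  · push_neg at hA
    set k0 := Nat.find hA with hk0def
    obtain ⟨hk01, hk0K, hk0lt⟩ := Nat.find_spec hA
    -- linear phase bound from k0 to K
    have hl := hlin (K - k0) k0 hk01 (by omega)
    have hcast : ((K - k0 : ℕ) : ℝ) = (K : ℝ) - k0 := by
      exact Nat.cast_sub hk0K
    rw [hcast] at hl
    have hl2 : ((K : ℝ) - k0 + 1) * (ε ^ 2 / (28 * n)) < 4 * R * ε := lt_of_le_of_lt hl hk0lt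
    rw [mul_div_assoc'] at hl2
    rw [div_lt_iff₀ h28] at hl2
    have hKk0 : (0:ℝ) ≤ (K : ℝ) - k0 := by
      have : (k0:ℝ) ≤ K := by exact_mod_cast hk0K
      linarith
    have hlink : ((K : ℝ) - k0 + 1) * ε ≤ 112 * n * R := by nlinarith [hε]
    rcases eq_or_lt_of_le hk01 with h1 | h2
    · -- k0 = 1
      apply hfin
      have : (k0:ℝ) = 1 := by exact_mod_cast h1.symm
      rw [this] at hlink
      nlinarith [mul_pos (mul_pos hn0 hR) hε, hε]
    · -- k0 ≥ 2: inverse phase up to k0 - 1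
      have hmin := Nat.find_min hA (show k0 - 1 < k0 by omega)
      push_neg at hmin
      have hge : 4 * R * ε ≤ δ (k0 - 1) := hmin (by omega) (by omega)
      have hi := hinv (k0 - 1) (by omega) (by omega)
      have hcast2 : ((k0 - 1 : ℕ) : ℝ) = (k0 : ℝ) - 1 := by
        push_cast [Nat.cast_sub (by omega : 1 ≤ k0)]; ring
      rw [hcast2] at hi
      have h2' : 1 / δ (k0 - 1) ≤ 1 / (4 * R * ε) :=
        one_div_le_one_div_of_le (by positivity) hge
      have h3 : ((k0 : ℝ) - 1 - 1) / C ≤ 1 / (4 * R * ε) := hi.trans h2'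
      rw [div_le_div_iff₀ hCpos (by positivity)] at h3
      have hk02 : ((k0 : ℝ) - 2) * ε ≤ 112 * n * R := by
        nlinarith [hR, hε, mul_pos hR hε]
      apply hfin
      nlinarith [hlink, hk02]
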